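/- Let n > 3 and let S₁, S₂ ⊆ 𝔽₂ⁿ be powerful sets each of cardinality 2^{n-2}. Then S₁ ◇ S₂ is not a linear subspace of 𝔽₂^{n+3}. -/
import Mathlib


/-- A finite set `S` of vectors in `𝔽₂ⁿ` is *powerful* if for every subset `X` of the
coordinate positions, the number of vectors in `S` that are zero at every position in `X`
is a power of 2. -/
def IsPowerful {n : ℕ} (S : Finset (Fin n → ZMod 2)) : Prop :=
  ∀ X : Finset (Fin n), ∃ d : ℕ, (S.filter (fun v => ∀ i ∈ X, v i = 0)).card = 2 ^ d

/-- The loop extension `T+∘ ⊆ 𝔽₂^{n+1}`: append a new last coordinate `0` to every vector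
of `T`. -/
def loopExt {n : ℕ} (T : Finset (Fin n → ZMod 2)) : Finset (Fin (n + 1) → ZMod 2) :=
  T.image (fun v => Fin.snoc v 0)

/-- The framing `T+□ ⊆ 𝔽₂^{n+1}`: the zero vector of length `n+1` together with every
nonzero vector of `T` extended by a new last coordinate equal to `1`. -/
def framing {n : ℕ} (T : Finset (Fin n → ZMod 2)) : Finset (Fin (n + 1) → ZMod 2) :=
  insert 0 ((T.filter (fun v => v ≠ 0)).image (fun v => Fin.snoc v 1))

/-- The combination `Q•R ⊆ 𝔽₂^{n+2}`:
`{v00 : v ∈ Q ∩ R} ∪ {v01 : v ∈ Q ∖ R} ∪ {v10 : v ∈ R ∖ Q} ∪ {v11 : v ∉ Q ∪ R}`. -/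
def bulletComb {n : ℕ} (Q R : Finset (Fin n → ZMod 2)) : Finset (Fin (n + 2) → ZMod 2) :=
  ((Q ∩ R).image (fun v => Fin.append v ![0, 0])) ∪
  ((Q \ R).image (fun v => Fin.append v ![0, 1])) ∪
  ((R \ Q).image (fun v => Fin.append v ![1, 0])) ∪
  (((Q ∪ R)ᶜ).image (fun v => Fin.append v ![1, 1]))

/-- A set `S ⊆ 𝔽₂ⁿ` is *linear* if it is the underlying set of a linear subspace over `𝔽₂`. -/
def IsLinear {n : ℕ} (S : Finset (Fin n → ZMod 2)) : Prop :=
  ∃ W : Submodule (ZMod 2) (Fin n → ZMod 2), (S : Set (Fin n → ZMod 2)) = W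

lemma append_add {m k : ℕ} (a a' : Fin m → ZMod 2) (b b' : Fin k → ZMod 2) :
    Fin.append a b + Fin.append a' b' = Fin.append (a + a') (b + b') := by
  funext i
  refine Fin.addCases (fun i => ?_) (fun i => ?_) i <;>
    simp [Fin.append_left, Fin.append_right]

/-- For `n > 3` and powerful sets `S₁, S₂ ⊆ 𝔽₂ⁿ` each of cardinality `2^{n-2}`,
`S₁ ◇ S₂ = (S₁+∘) • (S₂+□)` is not linear. -/
theorem diamond_nonlinear {n : ℕ} (hn : 3 < n) (S₁ S₂ : Finset (Fin n → ZMod 2))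
    (h₁ : IsPowerful S₁) (h₂ : IsPowerful S₂)
    (hc₁ : S₁.card = 2 ^ (n - 2)) (hc₂ : S₂.card = 2 ^ (n - 2)) :
    ¬ IsLinear (bulletComb (loopExt S₁) (framing S₂)) := by
  rintro ⟨W, hW⟩
  set Q := loopExt S₁ with hQdef
  set R := framing S₂ with hRdef
  set C : Finset (Fin (n + 1) → ZMod 2) := (Q ∪ R)ᶜ with hCdef
  -- cardinalities
  have hQcard : Q.card = 2 ^ (n - 2) := by
    rw [hQdef, loopExt, Finset.card_image_of_injective _ ?_, hc₁]
    intro v w h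
    funext i
    have := congrFun h i.castSucc
    simpa using this
  have hRcard : R.card ≤ 2 ^ (n - 2) + 1 := by
    rw [hRdef, framing]
    calc _ ≤ _ + 1 := Finset.card_insert_le _ _
    _ ≤ _ + 1 := by
        gcongr
        exact le_trans Finset.card_image_le (le_trans (Finset.card_filter_le _ _) hc₂.le)
  have huniv : Fintype.card (Fin (n + 1) → ZMod 2) = 2 ^ (n + 1) := by
    simp [Fintype.card_fun]
  have hCcard : 2 ^ (n + 1) < 2 * C.card := by
    have h1 : C.card = 2 ^ (n + 1) - (Q ∪ R).card := by
      rw [hCdef, Finset.card_compl, huniv]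
    have h2 : (Q ∪ R).card ≤ 2 ^ (n - 2) + (2 ^ (n - 2) + 1) := by
      calc (Q ∪ R).card ≤ Q.card + R.card := Finset.card_union_le _ _
      _ ≤ _ := by rw [hQcard]; gcongr
    obtain ⟨k, hk⟩ : ∃ k, n = k + 2 := ⟨n - 2, by omega⟩
    subst hk
    have hk2 : 2 ≤ k := by omega
    have hpow : 2 ≤ 2 ^ k := by
      calc 2 = 2 ^ 1 := rfl
      _ ≤ 2 ^ k := Nat.pow_le_pow_right (by norm_num) (by omega)
    simp only [Nat.add_sub_cancel] at h1 h2
    have e1 : 2 ^ (k + 2 + 1) = 8 * 2 ^ k := by ring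
    omega
  -- pick g not in Q
  set g : Fin (n + 1) → ZMod 2 := Fin.snoc 0 1 with hgdef
  have hg : g ∉ Q := by
    rw [hQdef, loopExt]
    intro hmem
    obtain ⟨v, _, hv⟩ := Finset.mem_image.mp hmem
    have := congrFun hv (Fin.last n)
    simp [hgdef] at this
  -- pigeonhole: find c₁ c₂ ∈ C with c₁ + c₂ = g
  have key : (C ∩ C.image (fun c => g + c)).Nonempty := by
    rw [← Finset.card_pos]
    have h1 : (C.image (fun c => g + c)).card = C.card :=
      Finset.card_image_of_injective _ (add_right_injective g)
    have h2 := Finset.card_union_add_card_inter C (C.image (fun c => g + c))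
    have h3 : (C ∪ C.image (fun c => g + c)).card ≤ 2 ^ (n + 1) :=
      le_trans (Finset.card_le_univ _) (le_of_eq huniv)
    omega
  obtain ⟨c₁, hc⟩ := key
  rw [Finset.mem_inter] at hc
  obtain ⟨hc₁C, hc₁img⟩ := hc
  obtain ⟨c₂, hc₂C, hc₂eq⟩ := Finset.mem_image.mp hc₁img
  have hself : ∀ v : Fin (n + 1) → ZMod 2, v + v = 0 := by
    intro v; funext i
    exact CharTwo.add_self_eq_zero _
  have hsum : c₁ + c₂ = g := by
    rw [← hc₂eq, add_assoc, hself, add_zero]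
  -- the two vectors and their sum
  have hmem : ∀ c ∈ C, Fin.append c ![1, 1] ∈ bulletComb Q R := by
    intro c hcC
    rw [bulletComb]
    exact Finset.mem_union_right _ (Finset.mem_image.mpr ⟨c, hcC, rfl⟩)
  have hv₁ : Fin.append c₁ ![(1 : ZMod 2), 1] ∈ W := by
    have h : Fin.append c₁ ![(1 : ZMod 2), 1] ∈ (↑(bulletComb Q R) : Set _) := by
      exact_mod_cast hmem c₁ hc₁C
    rw [hW] at h; exact h
  have hv₂ : Fin.append c₂ ![(1 : ZMod 2), 1] ∈ W := by
    have h : Fin.append c₂ ![(1 : ZMod 2), 1] ∈ (↑(bulletComb Q R) : Set _) := by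
      exact_mod_cast hmem c₂ hc₂C
    rw [hW] at h; exact h
  have hsumW : Fin.append g ![(0 : ZMod 2), 0] ∈ W := by
    have := W.add_mem hv₁ hv₂
    rwa [append_add, hsum, show (![(1 : ZMod 2), 1] + ![1, 1]) = ![0, 0] by decide] at this
  have hsumB : Fin.append g ![(0 : ZMod 2), 0] ∈ bulletComb Q R := by
    have : Fin.append g ![(0 : ZMod 2), 0] ∈ (W : Set _) := hsumW
    rw [← hW] at this
    exact_mod_cast this
  -- derive contradiction
  rw [bulletComb] at hsumB
  have tagne : ∀ (t : Fin 2 → ZMod 2), t ≠ ![0, 0] →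
      ∀ w : Fin (n + 1) → ZMod 2, Fin.append w t ≠ Fin.append g ![0, 0] := by
    intro t ht w h
    apply ht
    funext j
    have := congrFun h (Fin.natAdd (n + 1) j)
    simpa [Fin.append_right] using this
  simp only [Finset.mem_union, Finset.mem_image] at hsumB
  rcases hsumB with ((⟨w, hw, hweq⟩ | ⟨w, hw, hweq⟩) | ⟨w, hw, hweq⟩) | ⟨w, hw, hweq⟩
  · -- w ∈ Q ∩ R, w = g
    have hwg : w = g := by
      funext i
      have := congrFun hweq (Fin.castAdd 2 i)
      simpa [Fin.append_left] using this
    exact hg (Finset.mem_of_mem_inter_left (hwg ▸ hw))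
  · exact tagne _ (by decide) w hweq
  · exact tagne _ (by decide) w hweq
  · exact tagne _ (by decide) w hweq
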